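/- Let x(λ) and z(λ) denote the unique minimizers over X and Z of x ↦ φ₁(x) + ⟨λ, Ax⟩ + c·d_X(x) and z ↦ φ₂(z) + ⟨λ, Bz⟩ + c·d_Z(z), respectively. Then the map λ ↦ A x(λ) + B z(λ) − b is Lipschitz continuous on ℝⁿ with Lipschitz constant L_c = ‖A‖²/(c σ_X) + ‖B‖²/(c σ_Z). -/

import Mathlib

open scoped RealInnerProductSpace
open Set InnerProductSpace

variable {E : Type*} [NormedAddCommGroup E] [InnerProductSpace ℝ E]

lemma aux_fopt {s : Set E} (hs : Convex ℝ s) {f : E → ℝ} {f' : E →L[ℝ] ℝ} {a y : E}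
    (hf : HasFDerivAt f f' a) (ha : a ∈ s) (hy : y ∈ s) (hmin : IsMinOn f s a) :
    0 ≤ f' (y - a) :=
  hmin.localize.hasFDerivWithinAt_nonneg hf.hasFDerivWithinAt
    (sub_mem_posTangentConeAt_of_segment_subset (hs.segment_subset ha hy))

lemma aux_mono [CompleteSpace E] {φ : E → ℝ} (hconv : ConvexOn ℝ Set.univ φ)
    (hdiff : ∀ x, DifferentiableAt ℝ φ x) (x y : E) :
    ⟪gradient φ x, y - x⟫ ≤ ⟪gradient φ y, y - x⟫ := by
  set L : ℝ → E := fun t => x + t • (y - x) with hLdef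
  have hgconv : ConvexOn ℝ Set.univ (fun t : ℝ => φ (L t)) := by
    have h := hconv.comp_affineMap (AffineMap.lineMap x y : ℝ →ᵃ[ℝ] E)
    simp only [Set.preimage_univ] at h
    have hfun : (fun t : ℝ => φ (L t)) = φ ∘ AffineMap.lineMap x y := by
      funext t
      simp [hLdef, AffineMap.lineMap_apply_module', add_comm]
    rw [hfun]; exact h
  have hLd : ∀ t : ℝ, HasDerivAt L (y - x) t := fun t => by
    simpa [hLdef] using ((hasDerivAt_id t).smul_const (y - x)).const_add x
  have hg : ∀ t : ℝ, HasDerivAt (fun t => φ (L t)) ⟪gradient φ (L t), y - x⟫ t := fun t => by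
    have h1 : HasFDerivAt φ (toDual ℝ E (gradient φ (L t))) (L t) :=
      hasGradientAt_iff_hasFDerivAt.mp (hdiff (L t)).hasGradientAt
    simpa [toDual_apply_apply, Function.comp_def] using h1.comp_hasDerivAt t (hLd t)
  have hL0 : L 0 = x := by simp [hLdef]
  have hL1 : L 1 = y := by simp [hLdef]
  have h0 := hgconv.le_slope_of_hasDerivAt (mem_univ (0:ℝ)) (mem_univ 1) one_pos (hg 0)
  have h1 := hgconv.slope_le_of_hasDerivAt (mem_univ (0:ℝ)) (mem_univ 1) one_pos (hg 1)
  rw [hL0] at h0; rw [hL1] at h1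
  linarith

lemma aux_key {F : Type*} [NormedAddCommGroup F] [InnerProductSpace ℝ F]
    [CompleteSpace E]
    {s : Set E} (hconv : Convex ℝ s)
    {φ : E → ℝ} (hφd : ∀ x, DifferentiableAt ℝ φ x) (hφc : ConvexOn ℝ Set.univ φ)
    (A : E →L[ℝ] F) {d : E → ℝ} (hdd : ∀ x, DifferentiableAt ℝ d x)
    {σ c : ℝ} (hσ : 0 < σ) (hc : 0 < c)
    (hmono : ∀ x ∈ s, ∀ y ∈ s, σ * ‖x - y‖ ^ 2 ≤ ⟪gradient d x - gradient d y, x - y⟫)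
    (lam eta : F) {x₁ x₂ : E} (hx₁ : x₁ ∈ s) (hx₂ : x₂ ∈ s)
    (hm₁ : IsMinOn (fun x => φ x + ⟪lam, A x⟫ + c * d x) s x₁)
    (hm₂ : IsMinOn (fun x => φ x + ⟪eta, A x⟫ + c * d x) s x₂) :
    ‖x₁ - x₂‖ ≤ ‖A‖ / (c * σ) * ‖lam - eta‖ := by
  have hf : ∀ (μ : F) (a : E), HasFDerivAt (fun x => φ x + ⟪μ, A x⟫ + c * d x)
      (toDual ℝ E (gradient φ a) + ((innerSL ℝ μ).comp A) + c • toDual ℝ E (gradient d a)) a := by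
    intro μ a
    have h1 : HasFDerivAt φ (toDual ℝ E (gradient φ a)) a :=
      hasGradientAt_iff_hasFDerivAt.mp (hφd a).hasGradientAt
    have h2 : HasFDerivAt (fun x => ⟪μ, A x⟫) ((innerSL ℝ μ).comp A) a :=
      ((innerSL ℝ μ).comp A).hasFDerivAt
    have h3 : HasFDerivAt d (toDual ℝ E (gradient d a)) a :=
      hasGradientAt_iff_hasFDerivAt.mp (hdd a).hasGradientAt
    exact (h1.add h2).add (h3.const_mul c)
  have o1 := aux_fopt hconv (hf lam x₁) hx₁ hx₂ hm₁
  have o2 := aux_fopt hconv (hf eta x₂) hx₂ hx₁ hm₂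
  simp only [ContinuousLinearMap.add_apply, ContinuousLinearMap.coe_smul',
    Pi.smul_apply, ContinuousLinearMap.coe_comp', Function.comp_apply, toDual_apply_apply,
    smul_eq_mul] at o1 o2
  have hmφ := aux_mono hφc hφd x₂ x₁
  have hmd := hmono x₁ hx₁ x₂ hx₂
  -- rewrite everything in terms of v := x₁ - x₂
  have e1 : (x₂ - x₁ : E) = -(x₁ - x₂) := by abel
  rw [e1] at o1
  simp only [inner_neg_right, map_neg, inner_sub_left, inner_sub_right, map_sub] at o1 o2 hmφ hmd
  -- combine
  have key : c * (σ * ‖x₁ - x₂‖ ^ 2) ≤ ⟪eta - lam, A (x₁ - x₂)⟫ := by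
    have h4 : c * (σ * ‖x₁ - x₂‖ ^ 2) ≤ c * ⟪gradient d x₁ - gradient d x₂, x₁ - x₂⟫ :=
      mul_le_mul_of_nonneg_left (hmono x₁ hx₁ x₂ hx₂) hc.le
    simp only [innerSL_apply_apply] at o1 o2
    simp only [inner_sub_left, inner_sub_right, map_sub] at h4 ⊢
    nlinarith [o1, o2, hmφ]
  have hnorm : ⟪eta - lam, A (x₁ - x₂)⟫ ≤ ‖eta - lam‖ * (‖A‖ * ‖x₁ - x₂‖) :=
    le_trans (real_inner_le_norm _ _) (by
      have := A.le_opNorm (x₁ - x₂)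
      nlinarith [norm_nonneg (eta - lam)])
  have hrev : ‖eta - lam‖ = ‖lam - eta‖ := norm_sub_rev _ _
  rcases eq_or_lt_of_le (norm_nonneg (x₁ - x₂)) with h0 | h0
  · rw [← h0]
    positivity
  · have hcσ : 0 < c * σ := mul_pos hc hσ
    rw [div_mul_eq_mul_div, le_div_iff₀ hcσ]
    rw [hrev] at hnorm
    have h5 : (‖x₁ - x₂‖ * (c * σ)) * ‖x₁ - x₂‖ ≤ (‖A‖ * ‖lam - eta‖) * ‖x₁ - x₂‖ := by
      nlinarith [key, hnorm]
    exact le_of_mul_le_mul_right h5 h0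

/-- λ ↦ A x(λ) + B z(λ) − b is Lipschitz with constant
`L_c = ‖A‖²/(c σ_X) + ‖B‖²/(c σ_Z)`. -/
theorem gradient_map_lipschitz {n m p : ℕ}
    (X : Set (EuclideanSpace ℝ (Fin m))) (Z : Set (EuclideanSpace ℝ (Fin p)))
    (hXne : X.Nonempty) (hXcomp : IsCompact X) (hXconv : Convex ℝ X)
    (hZne : Z.Nonempty) (hZcomp : IsCompact Z) (hZconv : Convex ℝ Z)
    (φ₁ : EuclideanSpace ℝ (Fin m) → ℝ) (φ₂ : EuclideanSpace ℝ (Fin p) → ℝ)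
    (hφ₁diff : ∀ x, DifferentiableAt ℝ φ₁ x) (hφ₁conv : ConvexOn ℝ Set.univ φ₁)
    (hφ₂diff : ∀ z, DifferentiableAt ℝ φ₂ z) (hφ₂conv : ConvexOn ℝ Set.univ φ₂)
    (A : EuclideanSpace ℝ (Fin m) →L[ℝ] EuclideanSpace ℝ (Fin n))
    (B : EuclideanSpace ℝ (Fin p) →L[ℝ] EuclideanSpace ℝ (Fin n))
    (b : EuclideanSpace ℝ (Fin n))
    (dX : EuclideanSpace ℝ (Fin m) → ℝ) (dZ : EuclideanSpace ℝ (Fin p) → ℝ)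
    (hdXdiff : ∀ x, DifferentiableAt ℝ dX x) (hdZdiff : ∀ z, DifferentiableAt ℝ dZ z)
    (σX σZ : ℝ) (hσX : 0 < σX) (hσZ : 0 < σZ)
    (hdXmono : ∀ x ∈ X, ∀ y ∈ X,
      σX * ‖x - y‖ ^ 2 ≤ ⟪gradient dX x - gradient dX y, x - y⟫)
    (hdZmono : ∀ z ∈ Z, ∀ w ∈ Z,
      σZ * ‖z - w‖ ^ 2 ≤ ⟪gradient dZ z - gradient dZ w, z - w⟫)
    (c : ℝ) (hc : 0 < c)
    (xsol : EuclideanSpace ℝ (Fin n) → EuclideanSpace ℝ (Fin m))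
    (zsol : EuclideanSpace ℝ (Fin n) → EuclideanSpace ℝ (Fin p))
    (hxsol : ∀ lam, xsol lam ∈ X ∧
      IsMinOn (fun x => φ₁ x + ⟪lam, A x⟫ + c * dX x) X (xsol lam))
    (hzsol : ∀ lam, zsol lam ∈ Z ∧
      IsMinOn (fun z => φ₂ z + ⟪lam, B z⟫ + c * dZ z) Z (zsol lam))
    (hxsol_unique : ∀ lam, ∀ x₀ ∈ X,
      IsMinOn (fun x => φ₁ x + ⟪lam, A x⟫ + c * dX x) X x₀ → x₀ = xsol lam)
    (hzsol_unique : ∀ lam, ∀ z₀ ∈ Z,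
      IsMinOn (fun z => φ₂ z + ⟪lam, B z⟫ + c * dZ z) Z z₀ → z₀ = zsol lam)
    :
    ∀ lam eta : EuclideanSpace ℝ (Fin n),
      ‖(A (xsol lam) + B (zsol lam) - b) - (A (xsol eta) + B (zsol eta) - b)‖ ≤
        (‖A‖ ^ 2 / (c * σX) + ‖B‖ ^ 2 / (c * σZ)) * ‖lam - eta‖ := by
  intro lam eta
  obtain ⟨hx₁, hm₁⟩ := hxsol lam
  obtain ⟨hx₂, hm₂⟩ := hxsol eta
  obtain ⟨hz₁, hn₁⟩ := hzsol lam
  obtain ⟨hz₂, hn₂⟩ := hzsol eta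
  have hX := aux_key hXconv hφ₁diff hφ₁conv A hdXdiff hσX hc hdXmono lam eta hx₁ hx₂ hm₁ hm₂
  have hZ := aux_key hZconv hφ₂diff hφ₂conv B hdZdiff hσZ hc hdZmono lam eta hz₁ hz₂ hn₁ hn₂
  have e : (A (xsol lam) + B (zsol lam) - b) - (A (xsol eta) + B (zsol eta) - b)
      = A (xsol lam - xsol eta) + B (zsol lam - zsol eta) := by
    simp only [map_sub]; abel
  rw [e]
  calc ‖A (xsol lam - xsol eta) + B (zsol lam - zsol eta)‖
      ≤ ‖A (xsol lam - xsol eta)‖ + ‖B (zsol lam - zsol eta)‖ := norm_add_le _ _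
    _ ≤ ‖A‖ * ‖xsol lam - xsol eta‖ + ‖B‖ * ‖zsol lam - zsol eta‖ :=
        add_le_add (A.le_opNorm _) (B.le_opNorm _)
    _ ≤ ‖A‖ * (‖A‖ / (c * σX) * ‖lam - eta‖) + ‖B‖ * (‖B‖ / (c * σZ) * ‖lam - eta‖) :=
        add_le_add (mul_le_mul_of_nonneg_left hX (norm_nonneg _))
          (mul_le_mul_of_nonneg_left hZ (norm_nonneg _))
    _ = (‖A‖ ^ 2 / (c * σX) + ‖B‖ ^ 2 / (c * σZ)) * ‖lam - eta‖ := by ring
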